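/- arXiv:2409.16253 — 2 statements merged into one kernel-verified Lean document; each statement's English description precedes it below -/
import Mathlib

section
/- For all real numbers r, e, y with y ∈ {-1,+1}, all α > 0, β > 0, and m(x) fixed: the generalized 0-1 loss 1_{m(x)y≤0}1_{r>0} + c_1 1_{ey≤0}1_{r≤0} + c_e 1_{r≤0} is upper bounded by the surrogate L_S = 1_{m(x)y≤0} exp(α r) + c_1 exp((β/2)(-ey - r)) + c_e exp(-r), provided α ≥ 0 and β ≥ 0 are such that exp bounds the corresponding indicators (this holds for all α, β > 0). -/
open Real

/-- The generalized 0-1 loss is upper bounded by the surrogate loss L_S for all α, β > 0. -/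
theorem stmt5 (r e y mx c1 ce α β : ℝ) (hy : y = 1 ∨ y = -1)
    (hc1 : 0 < c1) (hce : 0 ≤ ce) (hα : 0 < α) (hβ : 0 < β) :
    (if mx * y ≤ 0 then (1:ℝ) else 0) * (if 0 < r then 1 else 0)
      + c1 * (if e * y ≤ 0 then (1:ℝ) else 0) * (if r ≤ 0 then 1 else 0)
      + ce * (if r ≤ 0 then (1:ℝ) else 0)
    ≤ (if mx * y ≤ 0 then (1:ℝ) else 0) * exp (α * r)
      + c1 * exp ((β / 2) * (-(e * y) - r)) + ce * exp (-r) := by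
  have h1 : (if mx * y ≤ 0 then (1:ℝ) else 0) * (if 0 < r then 1 else 0)
      ≤ (if mx * y ≤ 0 then (1:ℝ) else 0) * exp (α * r) := by
    split_ifs with h h2 <;> simp_all
    · nlinarith [Real.add_one_le_exp (α * r), mul_pos hα h2]
    · positivity
  have h2 : c1 * (if e * y ≤ 0 then (1:ℝ) else 0) * (if r ≤ 0 then 1 else 0)
      ≤ c1 * exp ((β / 2) * (-(e * y) - r)) := by
    split_ifs with h h2
    · have : (0:ℝ) ≤ (β / 2) * (-(e * y) - r) := by
        apply mul_nonneg (by linarith) (by linarith)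
      nlinarith [Real.one_le_exp this]
    all_goals nlinarith [Real.exp_pos ((β / 2) * (-(e * y) - r))]
  have h3 : ce * (if r ≤ 0 then (1:ℝ) else 0) ≤ ce * exp (-r) := by
    split_ifs with h
    · have : (1:ℝ) ≤ exp (-r) := Real.one_le_exp (by linarith)
      nlinarith
    · nlinarith [Real.exp_pos (-r)]
  linarith
end

section
/- Let c_1 > 0, c_e ≥ 0, P ∈ (c_e, c_e + c_1/2], α = (c_e + 2√((P-c_e)(c_1-(P-c_e))))/P, and η ∈ [0,1]. Then sign of r* = (1/(α+1)) ln((2c_1√(η(1-η)) + c_e)/(αP)) agrees with the sign of r^B = c_1(1/2 - |η - 1/2|) - P + c_e; i.e., r^B ≥ 0 implies r* ≥ 0 and r^B ≤ 0 implies r* ≤ 0. -/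
set_option maxHeartbeats 1000000 in
/-- In the intermediate case ce < P ≤ ce + c1/2, with the calibrated choice of α,
the sign of r* agrees with the sign of the Bayes rejection score r^B. -/
theorem stmt14 (c1 ce P η : ℝ) (hc1 : 0 < c1) (hce : 0 ≤ ce)
    (hPl : ce < P) (hPu : P ≤ ce + c1 / 2) (hη0 : 0 ≤ η) (hη1 : η ≤ 1)
    (α : ℝ) (hα : α = (ce + 2 * Real.sqrt ((P - ce) * (c1 - (P - ce)))) / P)
    (rstar : ℝ)
    (hrstar : rstar = (1 / (α + 1)) * Real.log ((2 * c1 * Real.sqrt (η * (1 - η)) + ce) / (α * P)))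
    (rB : ℝ) (hrB : rB = c1 * (1/2 - |η - 1/2|) - P + ce) :
    (0 ≤ rB → 0 ≤ rstar) ∧ (rB ≤ 0 → rstar ≤ 0) := by
  have hq0 : 0 < P - ce := by linarith
  have hqc : P - ce ≤ c1 / 2 := by linarith
  have hs0 : 0 < (P - ce) * (c1 - (P - ce)) := by nlinarith
  set s := Real.sqrt ((P - ce) * (c1 - (P - ce))) with hsdef
  have hspos : 0 < s := Real.sqrt_pos.mpr hs0
  have hP0 : 0 < P := lt_of_le_of_lt hce hPl
  have hαP : α * P = ce + 2 * s := by
    rw [hα]; field_simp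
  have hαPpos : 0 < α * P := by rw [hαP]; linarith
  have hαpos : 0 < α := by
    by_contra h
    push_neg at h
    nlinarith
  have hα1 : 0 < α + 1 := by linarith
  have habs2 : |η - 1/2| ^ 2 = (η - 1/2) ^ 2 := sq_abs _
  have habs0 : 0 ≤ |η - 1/2| := abs_nonneg _
  have habs1 : |η - 1/2| ≤ 1/2 := abs_le.mpr ⟨by linarith, by linarith⟩
  have hsqη : 0 ≤ Real.sqrt (η * (1 - η)) := Real.sqrt_nonneg _
  have hcs : c1 * Real.sqrt (η * (1 - η)) = Real.sqrt (c1 ^ 2 * (η * (1 - η))) := by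
    rw [Real.sqrt_mul (sq_nonneg c1), Real.sqrt_sq hc1.le]
  have hs2 : s ^ 2 = (P - ce) * (c1 - (P - ce)) := Real.sq_sqrt hs0.le
  constructor
  · intro hB
    have hmq : P - ce ≤ c1 * (1/2 - |η - 1/2|) := by rw [hrB] at hB; linarith
    have hBq : 0 ≤ c1 * (1/2 + |η - 1/2|) - (P - ce) := by
      linarith [mul_nonneg hc1.le habs0]
    have hAq : 0 ≤ c1 * (1/2 - |η - 1/2|) - (P - ce) := by linarith
    have key : (P - ce) * (c1 - (P - ce)) ≤ c1 ^ 2 * (η * (1 - η)) := by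
      nlinarith [mul_nonneg hAq hBq, habs2]
    have h1 : s ≤ c1 * Real.sqrt (η * (1 - η)) := by
      rw [hcs]; exact Real.sqrt_le_sqrt key
    have hN : α * P ≤ 2 * c1 * Real.sqrt (η * (1 - η)) + ce := by
      rw [hαP]; linarith
    have hr : 1 ≤ (2 * c1 * Real.sqrt (η * (1 - η)) + ce) / (α * P) :=
      (one_le_div hαPpos).mpr hN
    rw [hrstar]
    exact mul_nonneg (by positivity : (0:ℝ) ≤ 1 / (α + 1)) (Real.log_nonneg hr)
  · intro hB
    have hmq : c1 * (1/2 - |η - 1/2|) ≤ P - ce := by rw [hrB] at hB; linarith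
    have hBq : 0 ≤ c1 * (1/2 + |η - 1/2|) - (P - ce) := by
      linarith [mul_nonneg hc1.le habs0]
    have hAq : 0 ≤ (P - ce) - c1 * (1/2 - |η - 1/2|) := by linarith
    have key : c1 ^ 2 * (η * (1 - η)) ≤ (P - ce) * (c1 - (P - ce)) := by
      nlinarith [mul_nonneg hAq hBq, habs2]
    have h1 : c1 * Real.sqrt (η * (1 - η)) ≤ s := by
      rw [hcs]; exact Real.sqrt_le_sqrt key
    have hN : 2 * c1 * Real.sqrt (η * (1 - η)) + ce ≤ α * P := by
      rw [hαP]; linarith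
    have hr : (2 * c1 * Real.sqrt (η * (1 - η)) + ce) / (α * P) ≤ 1 :=
      (div_le_one hαPpos).mpr hN
    have hnum : 0 ≤ 2 * c1 * Real.sqrt (η * (1 - η)) + ce := add_nonneg (mul_nonneg (by linarith : (0:ℝ) ≤ 2 * c1) hsqη) hce
    have hr0 : 0 ≤ (2 * c1 * Real.sqrt (η * (1 - η)) + ce) / (α * P) :=
      div_nonneg hnum hαPpos.le
    rw [hrstar]
    exact mul_nonpos_of_nonneg_of_nonpos (le_of_lt (by positivity : (0:ℝ) < 1 / (α + 1)))
      (Real.log_nonpos hr0 hr)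
end
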